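/- Every finite tree with at least two vertices admits a 2-ONCF-coloring. That is, if G is a finite simple connected acyclic graph with |V(G)| ≥ 2, then there is a coloring c : V(G) → {red, blue} such that for every vertex v the open neighborhood N(v) contains a uniquely colored vertex. -/
import Mathlib


inductive Color where
  | red
  | blue
deriving DecidableEq

/-- A coloring `c` of the vertices of `G` is an open-neighborhood conflict-free
coloring if every open neighborhood `N(v)` contains a vertex whose color is unique
in `N(v)`. -/
def IsONCF {V C : Type*} (G : SimpleGraph V) (c : V → C) : Prop :=
  ∀ v : V, ∃ u ∈ G.neighborSet v, ∀ w ∈ G.neighborSet v, w ≠ u → c w ≠ c u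

/-- In an acyclic graph, any path realizes the distance between its endpoints. -/
lemma path_length_eq_dist {V : Type*} [DecidableEq V] {G : SimpleGraph V} (hacyc : G.IsAcyclic)
    {a b : V} (p : G.Walk a b) (hp : p.IsPath) : p.length = G.dist a b := by
  have hr : G.Reachable a b := ⟨p⟩
  obtain ⟨q, hq⟩ := hr.exists_walk_length_eq_dist
  have huniq : (⟨p, hp⟩ : G.Path a b) = ⟨q.bypass, q.bypass_isPath⟩ :=
    hacyc.path_unique _ _
  have hpl : p.length = q.bypass.length := by
    have := congrArg (fun r : G.Path a b => (r : G.Walk a b).length) huniq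
    simpa using this
  have h1 : p.length ≤ G.dist a b := by
    calc p.length = q.bypass.length := hpl
      _ ≤ q.length := q.length_bypass_le
      _ = G.dist a b := hq
  exact le_antisymm h1 (SimpleGraph.dist_le p)

/-- In a connected acyclic graph, every vertex `v ≠ r` has a unique "parent"
neighbor one step closer to `r`, and all its other neighbors are one step
farther from `r`. -/
lemma parent_lemma {V : Type*} [DecidableEq V] {G : SimpleGraph V} (hconn : G.Connected)
    (hacyc : G.IsAcyclic) (r : V) {v : V} (hv : v ≠ r) :
    ∃ u, G.Adj v u ∧ G.dist u r + 1 = G.dist v r ∧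
      ∀ w, G.Adj v w → w ≠ u → G.dist w r = G.dist v r + 1 := by
  have hreach : G.Reachable v r := hconn v r
  have hdpos : G.dist v r ≠ 0 := by
    intro h0
    exact hv (hreach.dist_eq_zero_iff.mp h0)
  obtain ⟨p0, hp0⟩ := SimpleGraph.exists_walk_of_dist_ne_zero hdpos
  set p := p0.bypass with hpdef
  have hppath : p.IsPath := p0.bypass_isPath
  have hplen : p.length = G.dist v r := path_length_eq_dist hacyc p hppath
  -- p has positive length so it is a cons
  cases hP : p with
  | nil =>
      exact absurd (hreach.dist_eq_zero_iff.mp (by rw [← hplen, hP]; rfl)) hv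
  | cons h q =>
      rw [hP] at hppath hplen
      rename_i u
      rw [SimpleGraph.Walk.cons_isPath_iff] at hppath
      obtain ⟨hqpath, hvq⟩ := hppath
      have hqlen : q.length = G.dist u r := path_length_eq_dist hacyc q hqpath
      refine ⟨u, h, by
        rw [← hplen, SimpleGraph.Walk.length_cons, hqlen], ?_⟩
      intro w hw hwu
      -- first show w ∉ q.support
      have hwq : w ∉ q.support := by
        intro hmem
        -- the prefix of q up to w, prefixed with the edge v-u, is a path from v to w
        have hs : (q.takeUntil w hmem).IsPath := hqpath.takeUntil hmem
        have hvs : v ∉ (q.takeUntil w hmem).support := fun hc =>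
          hvq (q.support_takeUntil_subset hmem hc)
        have hpath1 : (SimpleGraph.Walk.cons h (q.takeUntil w hmem)).IsPath :=
          hs.cons hvs
        have hpath2 : (SimpleGraph.Walk.cons hw SimpleGraph.Walk.nil).IsPath := by
          simp [SimpleGraph.Walk.cons_isPath_iff, hw.ne']
          exact hw.ne
        have := hacyc.path_unique
          (⟨SimpleGraph.Walk.cons h (q.takeUntil w hmem), hpath1⟩ : G.Path v w)
          ⟨SimpleGraph.Walk.cons hw SimpleGraph.Walk.nil, hpath2⟩
        have hsup := congrArg (fun r : G.Path v w => (r : G.Walk v w).support) this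
        simp only [SimpleGraph.Walk.support_cons, SimpleGraph.Walk.support_nil] at hsup
        have : u ∈ (q.takeUntil w hmem).support :=
          (q.takeUntil w hmem).start_mem_support
        rw [List.cons.injEq] at hsup
        rw [hsup.2] at this
        simp at this
        exact hwu this.symm
      have hwp : w ∉ p.support := by
        rw [hP, SimpleGraph.Walk.support_cons]
        intro hc
        rcases List.mem_cons.mp hc with h1 | h1
        · exact hw.ne' h1
        · exact hwq h1
      have hpath3 : (SimpleGraph.Walk.cons hw.symm p).IsPath := by
        rw [hP] at hwp ⊢
        exact (hqpath.cons hvq).cons hwp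
      have := path_length_eq_dist hacyc _ hpath3
      rw [SimpleGraph.Walk.length_cons, hP] at this
      omega

/-- Every finite tree (connected acyclic graph) with at least two vertices admits a
2-ONCF-coloring with colors red and blue. -/
theorem tree_two_ONCF {V : Type*} [Fintype V] (G : SimpleGraph V)
    (hconn : G.Connected) (hacyc : G.IsAcyclic) (hcard : 2 ≤ Fintype.card V) :
    ∃ c : V → Color, IsONCF G c := by
  classical
  -- pick any vertex x, and let r be a vertex at maximal distance from x
  have hne : Nonempty V := Fintype.card_pos_iff.mp (by omega)
  obtain ⟨x⟩ := hne
  obtain ⟨r, -, hrmax⟩ := Finset.exists_max_image Finset.univ (fun v => G.dist v x)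
    ⟨x, Finset.mem_univ x⟩
  -- r ≠ x since there is a vertex at positive distance from x
  have hrx : r ≠ x := by
    obtain ⟨y, hy⟩ := Fintype.exists_ne_of_one_lt_card (by omega) x
    have hy1 : 1 ≤ G.dist y x := Nat.one_le_iff_ne_zero.mpr (by
      intro h0
      exact hy ((hconn y x).dist_eq_zero_iff.mp h0))
    have := hrmax y (Finset.mem_univ y)
    intro h
    rw [h, SimpleGraph.dist_self] at this
    omega
  -- r is a leaf: its unique neighbor is its parent towards x
  obtain ⟨u₀, hu₀, -, hother⟩ := parent_lemma hconn hacyc x hrx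
  have hleaf : ∀ w, G.Adj r w → w = u₀ := by
    intro w hw
    by_contra hne'
    have := hother w hw hne'
    have := hrmax w (Finset.mem_univ w)
    omega
  -- the coloring by distance to r, in blocks of two
  refine ⟨fun v => if G.dist v r % 4 < 2 then Color.red else Color.blue, ?_⟩
  intro v
  by_cases hv : v = r
  · subst hv
    exact ⟨u₀, hu₀, fun w hw hwu => absurd (hleaf w hw) hwu⟩
  · obtain ⟨u, hu, hud, hother'⟩ := parent_lemma hconn hacyc r hv
    refine ⟨u, hu, ?_⟩
    intro w hw hwu
    have hwd : G.dist w r = G.dist u r + 2 := by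
      rw [hother' w hw hwu]; omega
    simp only [hwd]
    split_ifs with h1 h2 h2 <;> simp_all <;> omega
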